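/- For each k ∈ F_p, the module L_k with basis z_0, …, z_r (where r ∈ {0,…,p−1} satisfies r ≡ −2k mod p) and action ζ·z_j = (k+j)z_j, v·z_j = (1/2)j(1−2k−j)z_{j−1}, y·z_j = z_{j+1} (with z_{r+1} = 0), x·z_j = u·z_j = 0, g·z_j = z_j, is a well-defined simple D(H)-module of dimension r+1. -/

import Mathlib

namespace RestrictedJordanDouble

variable (K : Type*) [Field K]

/-- Generators of `D(H)`: `u = ι 0`, `v = ι 1`, `ζ = ι 2`, `g = ι 3`, `x = ι 4`, `y = ι 5`. -/
noncomputable abbrev U : FreeAlgebra K (Fin 6) := FreeAlgebra.ι K 0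
noncomputable abbrev V : FreeAlgebra K (Fin 6) := FreeAlgebra.ι K 1
noncomputable abbrev Z : FreeAlgebra K (Fin 6) := FreeAlgebra.ι K 2
noncomputable abbrev G : FreeAlgebra K (Fin 6) := FreeAlgebra.ι K 3
noncomputable abbrev X : FreeAlgebra K (Fin 6) := FreeAlgebra.ι K 4
noncomputable abbrev Y : FreeAlgebra K (Fin 6) := FreeAlgebra.ι K 5

/-- The defining relations of the Drinfeld double `D(H)` of the bosonization of the
restricted Jordan plane (Proposition 1.6). -/
inductive DRel (p : ℕ) : FreeAlgebra K (Fin 6) → FreeAlgebra K (Fin 6) → Prop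
  | gp : DRel p ((G K) ^ p) 1
  | gx : DRel p (G K * X K) (X K * G K)
  | gy : DRel p (G K * Y K) (Y K * G K + X K * G K)
  | xp : DRel p ((X K) ^ p) 0
  | yp : DRel p ((Y K) ^ p) 0
  | yx : DRel p (Y K * X K) (X K * Y K - (1/2 : K) • (X K) ^ 2)
  | zp : DRel p ((Z K) ^ p) (Z K)
  | gz : DRel p (G K * Z K) (Z K * G K)
  | vp : DRel p ((V K) ^ p) 0
  | up : DRel p ((U K) ^ p) 0
  | vu : DRel p (V K * U K) (U K * V K - (1/2 : K) • (U K) ^ 2)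
  | vz : DRel p (V K * Z K) (Z K * V K + V K)
  | uz : DRel p (U K * Z K) (Z K * U K + U K)
  | zy : DRel p (Z K * Y K) (Y K * Z K + Y K)
  | zx : DRel p (Z K * X K) (X K * Z K + X K)
  | vg : DRel p (V K * G K) (G K * V K + G K * U K)
  | ug : DRel p (U K * G K) (G K * U K)
  | vx : DRel p (V K * X K) (X K * V K + (1 - G K) + X K * U K)
  | ux : DRel p (U K * X K) (X K * U K)
  | uy : DRel p (U K * Y K) (Y K * U K + (1 - G K))
  | vy : DRel p (V K * Y K) (Y K * V K - G K * Z K + Y K * U K)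

/-- The Drinfeld double `D(H)`. -/
noncomputable abbrev DH (p : ℕ) := RingQuot (DRel K p)

/-- The images of the generators in `D(H)`. -/
noncomputable abbrev u (p : ℕ) : DH K p := RingQuot.mkAlgHom K (DRel K p) (U K)
noncomputable abbrev v (p : ℕ) : DH K p := RingQuot.mkAlgHom K (DRel K p) (V K)
noncomputable abbrev z (p : ℕ) : DH K p := RingQuot.mkAlgHom K (DRel K p) (Z K)
noncomputable abbrev g (p : ℕ) : DH K p := RingQuot.mkAlgHom K (DRel K p) (G K)
noncomputable abbrev x (p : ℕ) : DH K p := RingQuot.mkAlgHom K (DRel K p) (X K)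
noncomputable abbrev y (p : ℕ) : DH K p := RingQuot.mkAlgHom K (DRel K p) (Y K)


variable {K}


/-- Extend `f : Fin n → K` by zero to `ℕ`. -/
def extf {n : ℕ} (f : Fin n → K) (j : ℕ) : K :=
  if h : j < n then f ⟨j, h⟩ else 0

lemma extf_add {n : ℕ} (f g : Fin n → K) (j : ℕ) :
    extf (f + g) j = extf f j + extf g j := by
  unfold extf; split <;> simp

lemma extf_smul {n : ℕ} (c : K) (f : Fin n → K) (j : ℕ) :
    extf (c • f) j = c * extf f j := by
  unfold extf; split <;> simp

lemma extf_of_lt {n : ℕ} (f : Fin n → K) {j : ℕ} (h : j < n) :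
    extf f j = f ⟨j, h⟩ := dif_pos h

lemma extf_of_ge {n : ℕ} (f : Fin n → K) {j : ℕ} (h : n ≤ j) :
    extf f j = 0 := dif_neg (not_lt.mpr h)

/-- coefficient for the `v`-action -/
def cf (k : K) (j : ℕ) : K := (1/2 : K) * (j : K) * (1 - 2*k - (j : K))

lemma cf_succ (h2 : (2:K) ≠ 0) (k : K) (j : ℕ) : cf k (j + 1) = cf k j - (k + (j : K)) := by
  unfold cf; push_cast; field_simp; ring

/-- Diagonal operator `ζ`. -/
def Zop (k : K) (n : ℕ) : Module.End K (Fin n → K) where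
  toFun f := fun i => (k + ((i : ℕ) : K)) * f i
  map_add' f g := funext fun i => by simp [mul_add]
  map_smul' c f := funext fun i => by simp; ring

/-- Raising operator `y`. -/
def Yop (n : ℕ) : Module.End K (Fin n → K) where
  toFun f := fun i => if (i : ℕ) = 0 then 0 else extf f ((i : ℕ) - 1)
  map_add' f g := funext fun i => by
    by_cases h : (i : ℕ) = 0 <;> simp [h, extf_add]
  map_smul' c f := funext fun i => by
    by_cases h : (i : ℕ) = 0 <;> simp [h, extf_smul]

/-- Lowering operator `v`. -/
def Vop (k : K) (n : ℕ) : Module.End K (Fin n → K) where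
  toFun f := fun i => cf k ((i : ℕ) + 1) * extf f ((i : ℕ) + 1)
  map_add' f g := funext fun i => by simp [extf_add, mul_add]
  map_smul' c f := funext fun i => by simp [extf_smul]; ring

@[simp] lemma Zop_apply (k : K) (n : ℕ) (f : Fin n → K) (i : Fin n) :
    Zop k n f i = (k + ((i : ℕ) : K)) * f i := rfl

@[simp] lemma Yop_apply (n : ℕ) (f : Fin n → K) (i : Fin n) :
    Yop n f i = if (i : ℕ) = 0 then 0 else extf f ((i : ℕ) - 1) := rfl

@[simp] lemma Vop_apply (k : K) (n : ℕ) (f : Fin n → K) (i : Fin n) :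
    Vop k n f i = cf k ((i : ℕ) + 1) * extf f ((i : ℕ) + 1) := rfl

lemma Zop_mk (k : K) {n : ℕ} (f : Fin n → K) (m : ℕ) (h : m < n) :
    Zop k n f ⟨m, h⟩ = (k + (m : K)) * f ⟨m, h⟩ := rfl

lemma Yop_mk_zero {n : ℕ} (f : Fin n → K) (h : 0 < n) : Yop n f ⟨0, h⟩ = 0 := by
  simp [Yop]

lemma Yop_mk_succ {n : ℕ} (f : Fin n → K) (m : ℕ) (h : m + 1 < n) :
    Yop n f ⟨m + 1, h⟩ = f ⟨m, Nat.lt_of_succ_lt h⟩ := by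
  simp [Yop, extf_of_lt f (Nat.lt_of_succ_lt h)]

lemma Vop_mk (k : K) {n : ℕ} (f : Fin n → K) (m : ℕ) (hm : m < n) (h : m + 1 < n) :
    Vop k n f ⟨m, hm⟩ = cf k (m + 1) * f ⟨m + 1, h⟩ := by
  simp [Vop, extf_of_lt f h]

lemma Vop_mk_last (k : K) {n : ℕ} (f : Fin n → K) (m : ℕ) (hm : m < n) (h : n ≤ m + 1) :
    Vop k n f ⟨m, hm⟩ = 0 := by
  simp [Vop, extf_of_ge f h]

lemma zy_rel (k : K) (n : ℕ) :
    Zop k n * Yop n = Yop n * Zop k n + Yop n := by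
  refine LinearMap.ext fun f => funext fun i => ?_
  obtain ⟨iv, hlt⟩ := i
  simp only [Module.End.mul_apply, LinearMap.add_apply, Pi.add_apply]
  rcases iv with _ | m
  · simp only [Zop_mk, Yop_mk_zero]; ring
  · simp only [Zop_mk, Yop_mk_succ]
    push_cast
    ring

lemma vz_rel (k : K) (n : ℕ) :
    Vop k n * Zop k n = Zop k n * Vop k n + Vop k n := by
  refine LinearMap.ext fun f => funext fun i => ?_
  obtain ⟨iv, hlt⟩ := i
  simp only [Module.End.mul_apply, LinearMap.add_apply, Pi.add_apply]
  by_cases h : iv + 1 < n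
  · rw [Vop_mk k (Zop k n f) iv hlt h, Zop_mk, Zop_mk, Vop_mk k f iv hlt h]
    push_cast
    ring
  · rw [Vop_mk_last k (Zop k n f) iv hlt (by omega), Zop_mk,
      Vop_mk_last k f iv hlt (by omega)]
    ring

lemma vy_rel (k : K) (n : ℕ) (h2 : (2:K) ≠ 0) (hcf : cf k n = 0) :
    Vop k n * Yop n = Yop n * Vop k n - Zop k n := by
  refine LinearMap.ext fun f => funext fun i => ?_
  obtain ⟨iv, hlt⟩ := i
  simp only [Module.End.mul_apply, LinearMap.sub_apply, Pi.sub_apply]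
  rcases iv with _ | m
  · by_cases h : 0 + 1 < n
    · rw [Vop_mk k (Yop n f) 0 hlt h, Yop_mk_succ f 0 h, Yop_mk_zero (Vop k n f) hlt,
        Zop_mk]
      simp only [cf]
      push_cast
      field_simp
      ring
    · have hn1 : n = 1 := by omega
      have hk : k = 0 := by
        have h1 := hcf
        rw [hn1] at h1
        simp only [cf] at h1
        push_cast at h1
        field_simp at h1
        rcases mul_eq_zero.mp (by linear_combination -h1 : (2:K) * k = 0) with h' | h'
        · exact absurd h' h2
        · exact h'
      rw [Vop_mk_last k (Yop n f) 0 hlt (by omega), Yop_mk_zero (Vop k n f) hlt, Zop_mk, hk]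
      push_cast
      ring
  · by_cases h : m + 1 + 1 < n
    · rw [Vop_mk k (Yop n f) (m+1) hlt h, Yop_mk_succ f (m+1) h,
        Yop_mk_succ (Vop k n f) m hlt, Vop_mk k f m (Nat.lt_of_succ_lt hlt) hlt, Zop_mk,
        cf_succ h2 k (m+1)]
      push_cast
      ring
    · have key : cf k (m + 1) - (k + ((m:K) + 1)) = 0 := by
        have h1 := cf_succ h2 k (m + 1)
        have hn : m + 1 + 1 = n := by omega
        rw [hn, hcf] at h1
        push_cast at h1
        linear_combination -h1
      rw [Vop_mk_last k (Yop n f) (m+1) hlt (by omega),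
        Yop_mk_succ (Vop k n f) m hlt, Vop_mk k f m (Nat.lt_of_succ_lt hlt) hlt, Zop_mk]
      push_cast
      linear_combination (-(f ⟨m + 1, hlt⟩)) * key

lemma Zop_pow (k : K) (n : ℕ) (m : ℕ) (f : Fin n → K) (i : Fin n) :
    ((Zop k n) ^ m) f i = (k + ((i : ℕ) : K)) ^ m * f i := by
  induction m with
  | zero => simp
  | succ m ih =>
    rw [pow_succ']
    simp only [Module.End.mul_apply, Zop_apply, ih]
    ring

lemma Yop_pow_eq_zero (n : ℕ) (m : ℕ) (f : Fin n → K) (i : Fin n)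
    (h : (i : ℕ) < m) : ((Yop (K := K) n) ^ m) f i = 0 := by
  induction m generalizing i with
  | zero => omega
  | succ m ih =>
    rw [pow_succ']
    simp only [Module.End.mul_apply, Yop_apply]
    by_cases h0 : (i : ℕ) = 0
    · simp [h0]
    · simp only [h0, if_false]
      rcases lt_or_ge ((i : ℕ) - 1) n with hlt | hge
      · rw [extf_of_lt _ hlt, ih]
        simpa using by omega
      · exact extf_of_ge _ hge

lemma Vop_pow_eq_zero (k : K) (n : ℕ) (m : ℕ) (f : Fin n → K) (i : Fin n)
    (h : n ≤ (i : ℕ) + m) : ((Vop k n) ^ m) f i = 0 := by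
  induction m generalizing i with
  | zero => omega
  | succ m ih =>
    rw [pow_succ']
    simp only [Module.End.mul_apply, Vop_apply]
    rcases lt_or_ge ((i : ℕ) + 1) n with hlt | hge
    · rw [extf_of_lt _ hlt, ih]
      · ring
      · simpa using by omega
    · rw [extf_of_ge _ hge]; ring

lemma Yop_pow_n {n : ℕ} {p : ℕ} (h : n ≤ p) : (Yop (K := K) n) ^ p = 0 := by
  refine LinearMap.ext fun f => funext fun i => ?_
  rw [Yop_pow_eq_zero n p f i (lt_of_lt_of_le i.isLt h)]
  simp

lemma Vop_pow_n (k : K) {n : ℕ} {p : ℕ} (h : n ≤ p) : (Vop k n) ^ p = 0 := by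
  refine LinearMap.ext fun f => funext fun i => ?_
  rw [Vop_pow_eq_zero k n p f i (by omega)]
  simp

lemma Zop_pow_p (k : K) {n : ℕ} {p : ℕ}
    (hk : ∀ i : Fin n, (k + ((i : ℕ) : K)) ^ p = k + ((i : ℕ) : K)) :
    (Zop k n) ^ p = Zop k n := by
  refine LinearMap.ext fun f => funext fun i => ?_
  rw [Zop_pow, hk i, Zop_apply]

variable (K) in
/-- assignment of generators -/
noncomputable def asgn (k : K) (n : ℕ) : Fin 6 → Module.End K (Fin n → K) :=
  ![0, Vop k n, Zop k n, 1, 0, Yop n]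

lemma compat (k : K) (n p : ℕ) (hp : p ≠ 0) (h2 : (2:K) ≠ 0) (hnp : n ≤ p)
    (hcf : cf k n = 0)
    (hk : ∀ i : Fin n, (k + ((i : ℕ) : K)) ^ p = k + ((i : ℕ) : K)) :
    ∀ ⦃a b⦄, DRel K p a b →
      FreeAlgebra.lift K (asgn K k n) a = FreeAlgebra.lift K (asgn K k n) b := by
  intro a b h
  have e0 : FreeAlgebra.lift K (asgn K k n) (U K) = 0 := by
    simp [asgn, FreeAlgebra.lift_ι_apply]
  have e1 : FreeAlgebra.lift K (asgn K k n) (V K) = Vop k n := by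
    simp [asgn, FreeAlgebra.lift_ι_apply]
  have e2 : FreeAlgebra.lift K (asgn K k n) (Z K) = Zop k n := by
    simp [asgn, FreeAlgebra.lift_ι_apply]
  have e3 : FreeAlgebra.lift K (asgn K k n) (G K) = 1 := by
    simp [asgn, FreeAlgebra.lift_ι_apply]
  have e4 : FreeAlgebra.lift K (asgn K k n) (X K) = 0 := by
    simp [asgn, FreeAlgebra.lift_ι_apply]
  have e5 : FreeAlgebra.lift K (asgn K k n) (Y K) = Yop n := by
    rw [FreeAlgebra.lift_ι_apply]; rfl
  cases h <;>
    simp only [map_mul, map_pow, map_add, map_sub, map_one, map_smul, map_zero,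
      e0, e1, e2, e3, e4, e5] <;>
    first
      | rfl
      | exact one_pow p
      | exact zero_pow hp
      | exact Yop_pow_n hnp
      | exact Vop_pow_n k hnp
      | exact Zop_pow_p k hk
      | exact vz_rel k n
      | exact zy_rel k n
      | (rw [vy_rel k n h2 hcf]; simp)
      | simp

variable (K) in
/-- the representation -/
noncomputable def rho (k : K) (n p : ℕ) (hp : p ≠ 0) (h2 : (2:K) ≠ 0) (hnp : n ≤ p)
    (hcf : cf k n = 0)
    (hk : ∀ i : Fin n, (k + ((i : ℕ) : K)) ^ p = k + ((i : ℕ) : K)) :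
    DH K p →ₐ[K] Module.End K (Fin n → K) :=
  RingQuot.liftAlgHom K ⟨FreeAlgebra.lift K (asgn K k n), compat k n p hp h2 hnp hcf hk⟩

lemma rho_u (k : K) (n p : ℕ) (hp h2 hnp hcf hk) :
    rho K k n p hp h2 hnp hcf hk (u K p) = 0 := by
  rw [u, rho, RingQuot.liftAlgHom_mkAlgHom_apply]
  simp [asgn, FreeAlgebra.lift_ι_apply]

lemma rho_v (k : K) (n p : ℕ) (hp h2 hnp hcf hk) :
    rho K k n p hp h2 hnp hcf hk (v K p) = Vop k n := by
  rw [v, rho, RingQuot.liftAlgHom_mkAlgHom_apply]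
  simp [asgn, FreeAlgebra.lift_ι_apply]

lemma rho_z (k : K) (n p : ℕ) (hp h2 hnp hcf hk) :
    rho K k n p hp h2 hnp hcf hk (z K p) = Zop k n := by
  rw [z, rho, RingQuot.liftAlgHom_mkAlgHom_apply]
  simp [asgn, FreeAlgebra.lift_ι_apply]

lemma rho_g (k : K) (n p : ℕ) (hp h2 hnp hcf hk) :
    rho K k n p hp h2 hnp hcf hk (g K p) = 1 := by
  rw [g, rho, RingQuot.liftAlgHom_mkAlgHom_apply]
  simp [asgn, FreeAlgebra.lift_ι_apply]

lemma rho_x (k : K) (n p : ℕ) (hp h2 hnp hcf hk) :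
    rho K k n p hp h2 hnp hcf hk (x K p) = 0 := by
  rw [x, rho, RingQuot.liftAlgHom_mkAlgHom_apply]
  simp [asgn, FreeAlgebra.lift_ι_apply]

lemma rho_y (k : K) (n p : ℕ) (hp h2 hnp hcf hk) :
    rho K k n p hp h2 hnp hcf hk (y K p) = Yop n := by
  rw [y, rho, RingQuot.liftAlgHom_mkAlgHom_apply]
  rw [FreeAlgebra.lift_ι_apply]; rfl



lemma Zop_single (k : K) {n : ℕ} (j : Fin n) :
    Zop k n (Pi.single j 1) = (k + ((j : ℕ) : K)) • (Pi.single j 1 : Fin n → K) := by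
  funext i
  by_cases h : i = j
  · subst h; simp [Zop_apply]
  · simp [Zop_apply, Pi.single_eq_of_ne h]

lemma Vop_single_zero (k : K) {n : ℕ} (h : 0 < n) :
    Vop k n (Pi.single (⟨0, h⟩ : Fin n) 1) = 0 := by
  funext i
  obtain ⟨iv, hlt⟩ := i
  by_cases hh : iv + 1 < n
  · rw [Vop_mk k _ iv hlt hh]
    simp [Pi.single_apply, Fin.ext_iff]
  · rw [Vop_mk_last k _ iv hlt (by omega)]
    simp

lemma Vop_single_succ (k : K) {n : ℕ} (j : ℕ) (h : j + 1 < n) :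
    Vop k n (Pi.single (⟨j + 1, h⟩ : Fin n) 1)
      = cf k (j + 1) • (Pi.single (⟨j, Nat.lt_of_succ_lt h⟩ : Fin n) 1 : Fin n → K) := by
  funext i
  obtain ⟨iv, hlt⟩ := i
  by_cases hh : iv + 1 < n
  · rw [Vop_mk k _ iv hlt hh]
    by_cases hij : iv = j <;>
      simp [Pi.single_apply, Fin.ext_iff, hij]
  · rw [Vop_mk_last k _ iv hlt (by omega)]
    have hij : iv ≠ j := by omega
    simp [Pi.single_apply, Fin.ext_iff, hij]

lemma Yop_single {n : ℕ} (j : ℕ) (h : j + 1 < n) :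
    Yop n (Pi.single (⟨j, Nat.lt_of_succ_lt h⟩ : Fin n) (1:K))
      = Pi.single (⟨j + 1, h⟩ : Fin n) 1 := by
  funext i
  obtain ⟨iv, hlt⟩ := i
  rcases iv with _ | m
  · rw [Yop_mk_zero _ hlt]
    simp [Pi.single_apply, Fin.ext_iff]
  · rw [Yop_mk_succ _ m hlt]
    by_cases hm : m = j <;> simp [Pi.single_apply, Fin.ext_iff, hm]

lemma Yop_single_last {n : ℕ} (m : ℕ) (hn : n = m + 1) (h : m < n) :
    Yop n (Pi.single (⟨m, h⟩ : Fin n) (1:K)) = 0 := by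
  funext i
  obtain ⟨iv, hlt⟩ := i
  rcases iv with _ | l
  · rw [Yop_mk_zero _ hlt]; simp
  · rw [Yop_mk_succ _ l hlt]
    have : l ≠ m := by omega
    simp [Pi.single_apply, Fin.ext_iff, this]

/-- For `k₀ ∈ F_p`, with `r ∈ {0,…,p-1}`, `r ≡ -2k₀ (mod p)`, the prescription
`ζ·z_j = (k₀+j)z_j`, `v·z_j = (1/2)j(1-2k₀-j)z_{j-1}`, `y·z_j = z_{j+1}` (`z_{r+1} = 0`),
`x·z_j = u·z_j = 0`, `g·z_j = z_j` defines a simple `D(H)`-module structure (an algebra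
map `ρ : D(H) → End_K(K^{r+1})`) of dimension `r + 1`. -/
theorem stmt10 (K : Type*) [Field K] [IsAlgClosed K] (p : ℕ) [Fact p.Prime] (hp2 : 2 < p)
    [CharP K p] (k0 : ZMod p) (r : ℕ) (hr : r = ((-2 : ZMod p) * k0).val) :
    ∃ ρ : DH K p →ₐ[K] Module.End K (Fin (r + 1) → K),
      (∀ j : Fin (r + 1), ρ (z K p) (Pi.single j 1)
        = ((ZMod.castHom (dvd_refl p) K) k0 + ((j : ℕ) : K)) • (Pi.single j (1 : K) : Fin (r + 1) → K)) ∧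
      ρ (v K p) (Pi.single (0 : Fin (r + 1)) 1) = 0 ∧
      (∀ (j : ℕ) (h : j + 1 < r + 1),
        ρ (v K p) (Pi.single (⟨j + 1, h⟩ : Fin (r + 1)) 1)
          = ((1/2 : K) * ((j : K) + 1) * (1 - 2 * (ZMod.castHom (dvd_refl p) K) k0 - ((j : K) + 1)))
            • (Pi.single (⟨j, Nat.lt_of_succ_lt h⟩ : Fin (r + 1)) (1 : K) : Fin (r + 1) → K)) ∧
      (∀ (j : ℕ) (h : j + 1 < r + 1),
        ρ (y K p) (Pi.single (⟨j, Nat.lt_of_succ_lt h⟩ : Fin (r + 1)) 1)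
          = (Pi.single (⟨j + 1, h⟩ : Fin (r + 1)) (1 : K) : Fin (r + 1) → K)) ∧
      ρ (y K p) (Pi.single (⟨r, Nat.lt_succ_self r⟩ : Fin (r + 1)) (1 : K)) = 0 ∧
      ρ (x K p) = 0 ∧ ρ (u K p) = 0 ∧ ρ (g K p) = 1 ∧
      Module.finrank K (Fin (r + 1) → K) = r + 1 ∧
      (∀ W : Submodule K (Fin (r + 1) → K),
        (∀ (d : DH K p) (w : Fin (r + 1) → K), w ∈ W → ρ d w ∈ W) → W = ⊥ ∨ W = ⊤) := by
  classical
  have hpp : p.Prime := Fact.out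
  have hp0 : p ≠ 0 := hpp.ne_zero
  set k : K := ZMod.castHom (dvd_refl p) K k0 with hkdef
  have h2 : (2 : K) ≠ 0 := by
    intro h
    have h2' : ((2 : ℕ) : K) = 0 := by exact_mod_cast h
    have := (CharP.cast_eq_zero_iff K p 2).mp h2'
    have := Nat.le_of_dvd (by norm_num) this
    omega
  have hrlt : r < p := hr ▸ ZMod.val_lt _
  have hnp : r + 1 ≤ p := by omega
  have hinj : ∀ a b : ℕ, a < p → b < p → ((a : K) = (b : K)) → a = b := by
    intro a b ha hb hab
    have h1 : (ZMod.castHom (dvd_refl p) K) ((a : ZMod p)) =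
        (ZMod.castHom (dvd_refl p) K) ((b : ZMod p)) := by
      rw [map_natCast, map_natCast]; exact hab
    have h2' := ZMod.castHom_injective K h1
    calc a = ((a : ZMod p)).val := (ZMod.val_cast_of_lt ha).symm
    _ = ((b : ZMod p)).val := by rw [h2']
    _ = b := ZMod.val_cast_of_lt hb
  have hrK : (r : K) = -(2 * k) := by
    rw [hr]
    have hv : ((((-2 : ZMod p) * k0).val : ℕ) : K)
        = (ZMod.castHom (dvd_refl p) K) ((-2 : ZMod p) * k0) := by
      rw [ZMod.natCast_val, ZMod.castHom_apply]
    rw [hv, map_mul]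
    have : ((ZMod.castHom (dvd_refl p) K) (-2 : ZMod p)) = -2 := by
      rw [map_neg, map_ofNat]
    rw [this, hkdef]
    ring
  have hcf : cf k (r + 1) = 0 := by
    have hn : ((r + 1 : ℕ) : K) = (r : K) + 1 := by push_cast; ring
    unfold cf
    rw [hn, hrK]
    ring
  have hkp : ∀ i : Fin (r + 1), (k + ((i : ℕ) : K)) ^ p = k + ((i : ℕ) : K) := by
    intro i
    have h1 : k + ((i : ℕ) : K)
        = (ZMod.castHom (dvd_refl p) K) (k0 + ((i : ℕ) : ZMod p)) := by
      rw [map_add, map_natCast, hkdef]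
    rw [h1, ← map_pow, ZMod.pow_card]
  refine ⟨rho K k (r + 1) p hp0 h2 hnp hcf hkp, ?_, ?_, ?_, ?_, ?_, ?_, ?_, ?_, ?_, ?_⟩
  · intro j
    rw [rho_z, Zop_single]
  · rw [rho_v]
    exact Vop_single_zero k (Nat.succ_pos r)
  · intro j h
    rw [rho_v, Vop_single_succ k j h]
    have : cf k (j + 1)
        = (1/2 : K) * ((j : K) + 1) * (1 - 2 * (ZMod.castHom (dvd_refl p) K) k0 - ((j : K) + 1)) := by
      unfold cf
      push_cast
      try rw [← hkdef]
      try ring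
    rw [this]
  · intro j h
    rw [rho_y, Yop_single j h]
  · rw [rho_y, Yop_single_last r rfl (Nat.lt_succ_self r)]
  · exact rho_x k (r + 1) p hp0 h2 hnp hcf hkp
  · exact rho_u k (r + 1) p hp0 h2 hnp hcf hkp
  · exact rho_g k (r + 1) p hp0 h2 hnp hcf hkp
  · exact Module.finrank_fin_fun K
  · -- simplicity
    intro W hW
    by_cases hbot : W = ⊥
    · exact Or.inl hbot
    right
    obtain ⟨w, hwW, hw0⟩ := Submodule.exists_mem_ne_zero_of_ne_bot hbot
    have hZ : ∀ w ∈ W, Zop k (r + 1) w ∈ W := by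
      intro w hw
      have := hW (z K p) w hw
      rwa [rho_z] at this
    have hV : ∀ w ∈ W, Vop k (r + 1) w ∈ W := by
      intro w hw
      have := hW (v K p) w hw
      rwa [rho_v] at this
    have hY : ∀ w ∈ W, Yop (r + 1) w ∈ W := by
      intro w hw
      have := hW (y K p) w hw
      rwa [rho_y] at this
    -- extraction of a basis vector
    have extract : ∀ m : ℕ, ∀ w : Fin (r + 1) → K, w ∈ W → w ≠ 0 →
        (Finset.univ.filter fun i => w i ≠ 0).card ≤ m →
        ∃ j : Fin (r + 1), Pi.single j 1 ∈ W := by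
      intro m
      induction m with
      | zero =>
        intro w hwW hw0 hcard
        exfalso
        obtain ⟨j, hj⟩ := Function.ne_iff.mp hw0
        have hmem : j ∈ Finset.univ.filter fun i => w i ≠ 0 := by
          simp only [Finset.mem_filter, Finset.mem_univ, true_and]
          simpa using hj
        have := Finset.card_pos.mpr ⟨j, hmem⟩
        omega
      | succ m ih =>
        intro w hwW hw0 hcard
        obtain ⟨j0, hj0⟩ := Function.ne_iff.mp hw0
        have hj0' : w j0 ≠ 0 := by simpa using hj0
        by_cases hall : ∀ i, w i ≠ 0 → i = j0
        · refine ⟨j0, ?_⟩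
          have hsingle : Pi.single j0 (1:K) = (w j0)⁻¹ • w := by
            funext i
            by_cases hi : i = j0
            · subst hi
              simp [inv_mul_cancel₀ hj0']
            · have hwi : w i = 0 := by
                by_contra hne
                exact hi (hall i hne)
              simp [Pi.single_eq_of_ne hi, hwi]
          rw [hsingle]
          exact W.smul_mem _ hwW
        · push_neg at hall
          obtain ⟨j1, hj1ne, hj1⟩ := hall
          set w' : Fin (r + 1) → K := Zop k (r + 1) w - (k + ((j0 : ℕ) : K)) • w with hw'def
          have hw'W : w' ∈ W := Submodule.sub_mem _ (hZ w hwW) (Submodule.smul_mem _ _ hwW)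
          have hw'app : ∀ i, w' i = (((i : ℕ) : K) - ((j0 : ℕ) : K)) * w i := by
            intro i
            simp only [hw'def, Pi.sub_apply, Pi.smul_apply, Zop_apply, smul_eq_mul]
            ring
          have hw'j0 : w' j0 = 0 := by rw [hw'app]; ring
          have hj1j0 : ((j1 : ℕ) : K) ≠ ((j0 : ℕ) : K) := by
            intro hcast
            exact hj1 (Fin.ext (hinj _ _ (lt_of_lt_of_le j1.isLt hnp)
              (lt_of_lt_of_le j0.isLt hnp) hcast))
          have hw'j1 : w' j1 ≠ 0 := by
            rw [hw'app]
            exact mul_ne_zero (sub_ne_zero.mpr hj1j0) hj1ne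
          have hw'0 : w' ≠ 0 := by
            intro h
            exact hw'j1 (by rw [h]; rfl)
          have hmemj0 : j0 ∈ Finset.univ.filter fun i => w i ≠ 0 := by
            simp only [Finset.mem_filter, Finset.mem_univ, true_and]
            exact hj0'
          have hsub : (Finset.univ.filter fun i => w' i ≠ 0)
              ⊆ (Finset.univ.filter fun i => w i ≠ 0).erase j0 := by
            intro i hi
            simp only [Finset.mem_filter, Finset.mem_univ, true_and] at hi
            rw [Finset.mem_erase]
            constructor
            · rintro rfl
              exact hi hw'j0
            · simp only [Finset.mem_filter, Finset.mem_univ, true_and]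
              intro h0
              exact hi (by rw [hw'app, h0, mul_zero])
          have hcard' : (Finset.univ.filter fun i => w' i ≠ 0).card ≤ m := by
            have h1 := Finset.card_le_card hsub
            rw [Finset.card_erase_of_mem hmemj0] at h1
            omega
          exact ih w' hw'W hw'0 hcard'
    obtain ⟨j, hj⟩ := extract _ w hwW hw0 le_rfl
    -- nonvanishing of the lowering coefficients
    have hcfne : ∀ m : ℕ, m + 1 ≤ r → cf k (m + 1) ≠ 0 := by
      intro m hm
      have hfac1 : (1/2 : K) ≠ 0 := by
        simp [h2]
      have hfac2 : (((m + 1 : ℕ)) : K) ≠ 0 := by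
        intro h
        have : m + 1 = 0 := hinj (m + 1) 0 (by omega) (by omega) (by simpa using h)
        omega
      have hfac3 : (1 - 2 * k - (((m + 1 : ℕ)) : K)) ≠ 0 := by
        have heq : (1 - 2 * k - (((m + 1 : ℕ)) : K)) = (((r - m : ℕ)) : K) := by
          rw [Nat.cast_sub (by omega : m ≤ r)]
          push_cast
          linear_combination -hrK
        rw [heq]
        intro h
        have : r - m = 0 := hinj (r - m) 0 (by omega) (by omega) (by simpa using h)
        omega
      unfold cf
      exact mul_ne_zero (mul_ne_zero hfac1 hfac2) hfac3
    -- descend to the bottom basis vector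
    have down : ∀ m : ℕ, ∀ h : m < r + 1, Pi.single (⟨m, h⟩ : Fin (r + 1)) (1:K) ∈ W →
        Pi.single (⟨0, Nat.succ_pos r⟩ : Fin (r + 1)) (1:K) ∈ W := by
      intro m
      induction m with
      | zero => intro h hm; exact hm
      | succ m ih =>
        intro h hm
        have hcf' : cf k (m + 1) ≠ 0 := hcfne m (by omega)
        have h1 := hV _ hm
        rw [Vop_single_succ k m h] at h1
        have h3 := W.smul_mem (cf k (m + 1))⁻¹ h1
        rw [smul_smul, inv_mul_cancel₀ hcf', one_smul] at h3
        exact ih (Nat.lt_of_succ_lt h) h3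
    have h0W : Pi.single (⟨0, Nat.succ_pos r⟩ : Fin (r + 1)) (1:K) ∈ W := by
      obtain ⟨jv, hjlt⟩ := j
      exact down jv hjlt hj
    -- ascend to all basis vectors
    have up : ∀ m : ℕ, ∀ h : m < r + 1, Pi.single (⟨m, h⟩ : Fin (r + 1)) (1:K) ∈ W := by
      intro m
      induction m with
      | zero => intro h; exact h0W
      | succ m ih =>
        intro h
        have h1 := hY _ (ih (Nat.lt_of_succ_lt h))
        rwa [Yop_single m h] at h1
    have hall : ∀ j : Fin (r + 1), Pi.single j (1:K) ∈ W := by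
      intro j
      obtain ⟨jv, hjlt⟩ := j
      exact up jv hjlt
    rw [Submodule.eq_top_iff']
    intro f
    have hf : f = ∑ j : Fin (r + 1), f j • (Pi.single j (1:K) : Fin (r + 1) → K) := by
      funext i
      rw [Finset.sum_apply]
      simp [Pi.single_apply]
    rw [hf]
    exact Submodule.sum_mem _ fun j _ => Submodule.smul_mem _ _ (hall j)

end RestrictedJordanDouble
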